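/- Let n be a positive integer and α₁, α₂, β₁ integers, and write d₂ = gcd(α₂, n), d₁ = gcd(α₁, n). The number of triples (x, y, z) ∈ (ℤ/nℤ)³ satisfying α₂·(y − z) ≡ 0 (mod n) and α₁·(x − z) + β₁·(y − z) ≡ 0 (mod n) equals n · d₂ · gcd(β₁ · (n/d₂), d₁). -/

import Mathlib

open Finset


lemma count_mod (N r j : ℕ) (hrN : r ∣ N) (hj : j < r) :
    ((Finset.range N).filter (fun i => i % r = j)).card = N / r := by
  obtain ⟨q, rfl⟩ := hrN
  have hr : 0 < r := lt_of_le_of_lt (Nat.zero_le j) hj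
  have himg : ((Finset.range (r * q)).filter (fun i => i % r = j))
      = (Finset.range q).image (fun s => j + r * s) := by
    ext i
    simp only [Finset.mem_filter, Finset.mem_range, Finset.mem_image]
    constructor
    · rintro ⟨h1, h2⟩
      refine ⟨i / r, ?_, ?_⟩
      · have := Nat.div_add_mod i r
        rcases Nat.lt_or_ge (i / r) q with h | h
        · exact h
        · exfalso; nlinarith [Nat.div_add_mod i r]
      · have := Nat.div_add_mod i r; omega
    · rintro ⟨s, hs, rfl⟩
      constructor
      · nlinarith
      · rw [Nat.add_mul_mod_self_left]; exact Nat.mod_eq_of_lt hj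
  have hinj : Function.Injective (fun s => j + r * s) := by
    intro a b h
    simp only at h
    exact Nat.eq_of_mul_eq_mul_left hr (by omega)
  rw [himg, Finset.card_image_of_injective _ hinj,
    Finset.card_range, Nat.mul_div_cancel_left q hr]

lemma count_modZ (N r : ℕ) (hrN : r ∣ N) (hr : 0 < r) (i₀ : ℤ) :
    ((Finset.range N).filter (fun i : ℕ => (r : ℤ) ∣ (i : ℤ) - i₀)).card = N / r := by
  have hnonneg : 0 ≤ i₀ % r := Int.emod_nonneg i₀ (by exact_mod_cast hr.ne')
  have hlt : i₀ % r < r := Int.emod_lt_of_pos i₀ (by exact_mod_cast hr)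
  have hkey : ∀ i : ℕ, ((r : ℤ) ∣ (i : ℤ) - i₀) ↔ i % r = (i₀ % r).toNat := by
    intro i
    rw [← Int.modEq_iff_dvd]
    unfold Int.ModEq
    have hcast : ((i % r : ℕ) : ℤ) = (i : ℤ) % r := Int.natCast_mod i r
    omega
  have : ((Finset.range N).filter (fun i : ℕ => (r : ℤ) ∣ (i : ℤ) - i₀))
      = ((Finset.range N).filter (fun i => i % r = (i₀ % r).toNat)) := by
    apply Finset.filter_congr; intro i _; simp only [hkey i, decide_eq_true_eq]
  rw [this]
  exact count_mod N r _ hrN (by omega)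

lemma dvd_linear_iff (N : ℕ) (hN : 0 < N) (a j : ℤ) :
    (N : ℤ) ∣ a * j ↔ ((N / Int.gcd a N : ℕ) : ℤ) ∣ j := by
  obtain ⟨d, hdd⟩ : ∃ d : ℕ, Int.gcd a N = d := ⟨_, rfl⟩
  rw [hdd]
  have hdpos : 0 < d := hdd ▸ Int.gcd_pos_of_ne_zero_right a (by exact_mod_cast hN.ne')
  have hd0 : ((d : ℕ) : ℤ) ≠ 0 := by exact_mod_cast hdpos.ne'
  have hda : ((d : ℕ) : ℤ) ∣ a := hdd ▸ Int.gcd_dvd_left a N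
  have hdN : ((d : ℕ) : ℤ) ∣ (N : ℤ) := hdd ▸ Int.gcd_dvd_right a N
  have hcop : Int.gcd ((N : ℤ) / d) (a / d) = 1 := by
    rw [Int.gcd_comm, hdd.symm]
    exact Int.gcd_div_gcd_div_gcd (hdd ▸ hdpos)
  have hcast : ((N / d : ℕ) : ℤ) = (N : ℤ) / (d : ℕ) := Int.natCast_div N d
  obtain ⟨a', ha'⟩ := hda
  obtain ⟨N', hN'⟩ := hdN
  have hNd : (N : ℤ) / (d : ℕ) = N' := by
    rw [hN']; exact Int.mul_ediv_cancel_left N' hd0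
  have had : a / (d : ℕ) = a' := by
    rw [ha']; exact Int.mul_ediv_cancel_left a' hd0
  rw [hcast, hNd]
  rw [hNd, had] at hcop
  constructor
  · intro h
    rw [hN', ha', mul_assoc] at h
    have h2 : N' ∣ a' * j := (mul_dvd_mul_iff_left hd0).mp h
    exact Int.dvd_of_dvd_mul_right_of_gcd_one h2 hcop
  · intro h
    rw [hN', ha']
    obtain ⟨k, rfl⟩ := h
    exact ⟨a' * k, by ring⟩

lemma int_count (N : ℕ) (hN : 0 < N) (a c : ℤ) :
    ((Finset.range N).filter (fun i : ℕ => (N : ℤ) ∣ a * i - c)).card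
      = if (Int.gcd a N : ℤ) ∣ c then Int.gcd a N else 0 := by
  have hdpos : 0 < Int.gcd a N := Int.gcd_pos_of_ne_zero_right a (by exact_mod_cast hN.ne')
  have hdN : (Int.gcd a N : ℤ) ∣ (N : ℤ) := Int.gcd_dvd_right a N
  have hdNnat : Int.gcd a N ∣ N := by exact_mod_cast hdN
  have hda : (Int.gcd a N : ℤ) ∣ a := Int.gcd_dvd_left a N
  by_cases hc : (Int.gcd a N : ℤ) ∣ c
  · rw [if_pos hc]
    -- particular solution i₀
    obtain ⟨q, hq⟩ := hc
    set i₀ : ℤ := Int.gcdA a N * q with hi₀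
    have hsol : (N : ℤ) ∣ a * i₀ - c := by
      have hbez : (Int.gcd a N : ℤ) = a * Int.gcdA a N + N * Int.gcdB a N :=
        Int.gcd_eq_gcd_ab a N
      refine ⟨-(Int.gcdB a N * q), ?_⟩
      rw [hi₀, hq]
      linear_combination (-q) * hbez
    have hiff : ∀ i : ℕ, ((N : ℤ) ∣ a * i - c) ↔
        (((N / Int.gcd a N : ℕ) : ℤ) ∣ (i : ℤ) - i₀) := by
      intro i
      rw [← dvd_linear_iff N hN a ((i : ℤ) - i₀)]
      constructor
      · intro h
        have : a * i - c - (a * i₀ - c) = a * ((i:ℤ) - i₀) := by ring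
        exact this ▸ dvd_sub h hsol
      · intro h
        have : a * ((i:ℤ) - i₀) + (a * i₀ - c) = a * i - c := by ring
        exact this ▸ dvd_add h hsol
    have : ((Finset.range N).filter (fun i : ℕ => (N : ℤ) ∣ a * i - c))
        = ((Finset.range N).filter (fun i : ℕ => ((N / Int.gcd a N : ℕ) : ℤ) ∣ (i : ℤ) - i₀)) := by
      apply Finset.filter_congr; intro i _; simp only [hiff i]
    rw [this, count_modZ N (N / Int.gcd a N) (Nat.div_dvd_of_dvd hdNnat)
      (Nat.div_pos (Nat.le_of_dvd hN hdNnat) hdpos) i₀,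
      Nat.div_div_self hdNnat hN.ne']
  · rw [if_neg hc]
    rw [Finset.card_eq_zero, Finset.filter_eq_empty_iff]
    intro i _
    intro h
    apply hc
    have h1 : (Int.gcd a N : ℤ) ∣ a * i := hda.mul_right _
    have h2 : (Int.gcd a N : ℤ) ∣ a * i - c := dvd_trans hdN h
    have h3 : c = a * i - (a * i - c) := by ring
    rw [h3]; exact dvd_sub h1 h2

variable (n : ℕ) [NeZero n]

lemma zmod_range_card (P : ZMod n → Prop) [DecidablePred P] :
    (Finset.univ.filter P).card = ((Finset.range n).filter (fun i : ℕ => P (i : ZMod n))).card := by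
  apply Finset.card_nbij (fun u => u.val)
  · intro u hu
    simp only [Finset.mem_coe, Finset.mem_filter, Finset.mem_range] at *
    exact ⟨ZMod.val_lt u, by rw [ZMod.natCast_rightInverse u]; exact hu.2⟩
  · intro a _ b _ h
    exact ZMod.val_injective n h
  · intro i hi
    simp only [Finset.coe_filter, Finset.mem_range, Set.mem_setOf_eq, Finset.mem_univ,
      true_and] at *
    exact ⟨(i : ZMod n), hi.2, ZMod.val_cast_of_lt hi.1⟩

lemma zmod_count (a x : ℤ) :
    (Finset.univ.filter (fun u : ZMod n => (a : ZMod n) * u = (x : ZMod n))).card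
      = if (Int.gcd a n : ℤ) ∣ x then Int.gcd a n else 0 := by
  rw [zmod_range_card]
  have : ∀ i : ℕ, ((a : ZMod n) * (i : ZMod n) = (x : ZMod n)) ↔ ((n : ℤ) ∣ a * i - x) := by
    intro i
    rw [← sub_eq_zero]
    have : (a : ZMod n) * (i : ZMod n) - (x : ZMod n) = ((a * i - x : ℤ) : ZMod n) := by
      push_cast; ring
    rw [this, ZMod.intCast_zmod_eq_zero_iff_dvd]
  have hfe : ((Finset.range n).filter (fun i : ℕ => (a : ZMod n) * (i : ZMod n) = (x : ZMod n)))
      = ((Finset.range n).filter (fun i : ℕ => (n : ℤ) ∣ a * i - x)) := by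
    apply Finset.filter_congr; intro i _; simp only [this i]
  rw [hfe, int_count n (Nat.pos_of_ne_zero (NeZero.ne n)) a x]

/-- Type II count: the number of triples `(x,y,z) ∈ (ℤ/nℤ)³` with
`α₂(y−z) = 0` and `α₁(x−z) + β₁(y−z) = 0` is
`n · d₂ · gcd(β₁·(n/d₂), d₁)` where `d₂ = gcd(α₂,n)`, `d₁ = gcd(α₁,n)`. -/
theorem stmt_2 (n : ℕ) [NeZero n] (α₁ α₂ β₁ : ℤ) :
    (Finset.univ.filter
        (fun p : ZMod n × ZMod n × ZMod n =>
          (α₂ : ZMod n) * (p.2.1 - p.2.2) = 0 ∧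
          (α₁ : ZMod n) * (p.1 - p.2.2) + (β₁ : ZMod n) * (p.2.1 - p.2.2) = 0)).card
      = n * Int.gcd α₂ n *
          Int.gcd (β₁ * ((n / Int.gcd α₂ n : ℕ) : ℤ)) (Int.gcd α₁ n) := by
  have hn : 0 < n := Nat.pos_of_ne_zero (NeZero.ne n)
  set d₂ : ℕ := Int.gcd α₂ (n : ℤ) with hd2def
  set d₁ : ℕ := Int.gcd α₁ (n : ℤ) with hd1def
  set m : ℕ := n / d₂ with hmdef
  set g : ℕ := Int.gcd (β₁ * (m : ℤ)) ((d₁ : ℕ) : ℤ) with hgdef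
  have hd2pos : 0 < d₂ := Int.gcd_pos_of_ne_zero_right α₂ (by exact_mod_cast hn.ne')
  have hd1pos : 0 < d₁ := Int.gcd_pos_of_ne_zero_right α₁ (by exact_mod_cast hn.ne')
  have hd2n : d₂ ∣ n := by
    have : ((d₂ : ℕ) : ℤ) ∣ (n : ℤ) := hd2def ▸ Int.gcd_dvd_right α₂ n
    exact_mod_cast this
  have hd1n : d₁ ∣ n := by
    have : ((d₁ : ℕ) : ℤ) ∣ (n : ℤ) := hd1def ▸ Int.gcd_dvd_right α₁ n
    exact_mod_cast this
  have hmpos : 0 < m := Nat.div_pos (Nat.le_of_dvd hn hd2n) hd2pos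
  have hmd : m * d₂ = n := Nat.div_mul_cancel hd2n
  have hgd : g ∣ d₁ := by
    have : ((g : ℕ) : ℤ) ∣ ((d₁ : ℕ) : ℤ) := hgdef ▸ Int.gcd_dvd_right (β₁ * (m : ℤ)) ((d₁ : ℕ) : ℤ)
    exact_mod_cast this
  have hgpos : 0 < g := hgdef ▸ Int.gcd_pos_of_ne_zero_right _ (by exact_mod_cast hd1pos.ne')
  set e : ℕ := d₁ / g with hedef
  have heg : e * g = d₁ := Nat.div_mul_cancel hgd
  have hepos : 0 < e := by
    rcases Nat.eq_zero_or_pos e with h | h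
    · rw [h, zero_mul] at heg; omega
    · exact h
  -- e ∣ d₂
  have hed2 : e ∣ d₂ := by
    set h : ℕ := Nat.gcd d₁ m with hhdef
    have hhpos : 0 < h := Nat.gcd_pos_of_pos_left m hd1pos
    have hhg : h ∣ g := by
      have hg_eq : g = Nat.gcd (β₁.natAbs * m) d₁ := by
        rw [hgdef]
        show Nat.gcd (β₁ * (m : ℤ)).natAbs ((d₁ : ℤ)).natAbs = _
        rw [Int.natAbs_mul, Int.natAbs_natCast, Int.natAbs_natCast]
      rw [hg_eq]
      exact Nat.dvd_gcd ((Nat.gcd_dvd_right d₁ m).mul_left β₁.natAbs) (Nat.gcd_dvd_left d₁ m)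
    have hcop : Nat.Coprime (d₁ / h) (m / h) := Nat.coprime_div_gcd_div_gcd hhpos
    obtain ⟨x, hx⟩ := Nat.gcd_dvd_left d₁ m
    obtain ⟨y, hy⟩ := Nat.gcd_dvd_right d₁ m
    have hdvd : d₁ ∣ m * d₂ := hmd ▸ hd1n
    have hxy : x ∣ y * d₂ := by
      have : h * x ∣ h * (y * d₂) := by
        rw [← hx, ← mul_assoc, ← hy]; exact hdvd
      exact (mul_dvd_mul_iff_left hhpos.ne').mp this
    have hxe : d₁ / h = x := by rw [hx]; exact Nat.mul_div_cancel_left x hhpos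
    have hye : m / h = y := by rw [hy]; exact Nat.mul_div_cancel_left y hhpos
    have hxd2 : x ∣ d₂ := by
      refine Nat.Coprime.dvd_of_dvd_mul_left ?_ hxy
      rw [← hxe, ← hye]; exact hcop
    -- e ∣ d₁ / h = x
    obtain ⟨u, hu⟩ := hhg
    obtain ⟨w, hw⟩ := hgd
    have hde : d₁ / g = w := by rw [hw]; exact Nat.mul_div_cancel_left w hgpos
    have hdh : d₁ / h = u * w := by
      rw [hw, hu, mul_assoc]; exact Nat.mul_div_cancel_left _ hhpos
    have : e ∣ d₁ / h := by rw [hedef, hde, hdh]; exact dvd_mul_left w u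
    exact dvd_trans (hxe ▸ this) hxd2
  -- Step 1: reduce the triple count to a pair count
  have step1 : (Finset.univ.filter
        (fun p : ZMod n × ZMod n × ZMod n =>
          (α₂ : ZMod n) * (p.2.1 - p.2.2) = 0 ∧
          (α₁ : ZMod n) * (p.1 - p.2.2) + (β₁ : ZMod n) * (p.2.1 - p.2.2) = 0)).card
      = (Finset.univ.filter
          (fun q : ZMod n × ZMod n =>
            (α₂ : ZMod n) * q.2 = 0 ∧
            (α₁ : ZMod n) * q.1 + (β₁ : ZMod n) * q.2 = 0)).card * n := by
    have hcard : ((Finset.univ.filter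
          (fun q : ZMod n × ZMod n =>
            (α₂ : ZMod n) * q.2 = 0 ∧
            (α₁ : ZMod n) * q.1 + (β₁ : ZMod n) * q.2 = 0)) ×ˢ
        (Finset.univ : Finset (ZMod n))).card
        = (Finset.univ.filter
          (fun q : ZMod n × ZMod n =>
            (α₂ : ZMod n) * q.2 = 0 ∧
            (α₁ : ZMod n) * q.1 + (β₁ : ZMod n) * q.2 = 0)).card * n := by
      rw [Finset.card_product, Finset.card_univ, ZMod.card]
    rw [← hcard]
    refine Finset.card_bij' (fun p _ => ((p.1 - p.2.2, p.2.1 - p.2.2), p.2.2))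
      (fun q _ => (q.1.1 + q.2, q.1.2 + q.2, q.2)) ?_ ?_ ?_ ?_
    · intro p hp
      simp only [Finset.mem_filter, Finset.mem_univ, true_and] at hp
      simp only [Finset.mem_product, Finset.mem_filter, Finset.mem_univ, true_and, and_true]
      exact hp
    · intro q hq
      simp only [Finset.mem_product, Finset.mem_filter, Finset.mem_univ, true_and, and_true] at hq
      simp only [Finset.mem_filter, Finset.mem_univ, true_and, add_sub_cancel_right]
      exact hq
    · intro p _
      simp only [sub_add_cancel]
    · intro q _
      simp only [add_sub_cancel_right]
  rw [step1]
  -- Step 2: expand the pair count as a sum over v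
  have step2 : (Finset.univ.filter
          (fun q : ZMod n × ZMod n =>
            (α₂ : ZMod n) * q.2 = 0 ∧
            (α₁ : ZMod n) * q.1 + (β₁ : ZMod n) * q.2 = 0)).card
      = ∑ v : ZMod n, (Finset.univ.filter
          (fun u : ZMod n =>
            (α₂ : ZMod n) * v = 0 ∧ (α₁ : ZMod n) * u + (β₁ : ZMod n) * v = 0)).card := by
    rw [Finset.card_filter, Fintype.sum_prod_type, Finset.sum_comm]
    exact Finset.sum_congr rfl fun v _ => (Finset.card_filter _ _).symm
  rw [step2]
  -- Step 3: compute each summand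
  have step3 : ∀ v : ZMod n, (Finset.univ.filter
          (fun u : ZMod n =>
            (α₂ : ZMod n) * v = 0 ∧ (α₁ : ZMod n) * u + (β₁ : ZMod n) * v = 0)).card
      = if ((α₂ : ZMod n) * v = 0 ∧ (d₁ : ℤ) ∣ β₁ * (v.val : ℕ)) then d₁ else 0 := by
    intro v
    by_cases h2 : (α₂ : ZMod n) * v = 0
    · have hv : ((v.val : ℕ) : ZMod n) = v := ZMod.natCast_rightInverse v
      have hpred : ∀ u : ZMod n,
          (((α₂ : ZMod n) * v = 0 ∧ (α₁ : ZMod n) * u + (β₁ : ZMod n) * v = 0)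
            ↔ ((α₁ : ZMod n) * u = ((-(β₁ * (v.val : ℕ)) : ℤ) : ZMod n))) := by
        intro u
        rw [and_iff_right h2]
        have hcast : ((-(β₁ * (v.val : ℕ)) : ℤ) : ZMod n) = -((β₁ : ZMod n) * v) := by
          push_cast [hv]; ring
        rw [hcast, eq_neg_iff_add_eq_zero]
      rw [Finset.filter_congr (fun u _ => hpred u), zmod_count n α₁ (-(β₁ * (v.val : ℕ)))]
      rw [← hd1def]
      exact if_congr (dvd_neg.trans (and_iff_right h2).symm) rfl rfl
    · rw [if_neg (by tauto)]
      rw [Finset.card_eq_zero, Finset.filter_eq_empty_iff]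
      intro u _
      tauto
  rw [Finset.sum_congr rfl fun v _ => step3 v]
  -- Step 4: turn the sum of ifs into d₁ times a count
  rw [Finset.sum_ite, Finset.sum_const, Finset.sum_const_zero, add_zero, smul_eq_mul]
  -- Step 5: transfer the v-count to a count over range n
  rw [zmod_range_card n (fun v : ZMod n => (α₂ : ZMod n) * v = 0 ∧ (d₁ : ℤ) ∣ β₁ * (v.val : ℕ))]
  have step5 : ((Finset.range n).filter
        (fun i : ℕ => (α₂ : ZMod n) * ((i : ℕ) : ZMod n) = 0 ∧
          (d₁ : ℤ) ∣ β₁ * ((((i : ℕ) : ZMod n)).val : ℕ))).card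
      = ((Finset.range n).filter
        (fun i : ℕ => m ∣ i ∧ (d₁ : ℤ) ∣ β₁ * (i : ℕ))).card := by
    congr 1
    refine Finset.filter_congr fun i hi => ?_
    simp only [Finset.mem_range] at hi
    rw [ZMod.val_cast_of_lt hi]
    have h1 : ((α₂ : ZMod n) * ((i : ℕ) : ZMod n) = 0) ↔ (m ∣ i) := by
      have hc : (α₂ : ZMod n) * ((i : ℕ) : ZMod n) = ((α₂ * i : ℤ) : ZMod n) := by push_cast; ring
      rw [hc, ZMod.intCast_zmod_eq_zero_iff_dvd, dvd_linear_iff n hn α₂ i, ← hd2def, ← hmdef]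
      exact Int.natCast_dvd_natCast
    rw [h1]
  rw [step5]
  -- Step 6: substitute i = m * s
  have step6 : ((Finset.range n).filter
        (fun i : ℕ => m ∣ i ∧ (d₁ : ℤ) ∣ β₁ * (i : ℕ)))
      = ((Finset.range d₂).filter
        (fun s : ℕ => (d₁ : ℤ) ∣ β₁ * (m : ℕ) * (s : ℕ))).image (fun s => m * s) := by
    ext i
    simp only [Finset.mem_filter, Finset.mem_range, Finset.mem_image]
    constructor
    · rintro ⟨h1, h2, h3⟩
      refine ⟨i / m, ⟨?_, ?_⟩, Nat.mul_div_cancel' h2⟩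
      · have := Nat.mul_div_cancel' h2
        rcases Nat.lt_or_ge (i / m) d₂ with h | h
        · exact h
        · exfalso; nlinarith [hmd]
      · have hieq : (i : ℤ) = (m : ℤ) * ((i / m : ℕ) : ℤ) := by
          exact_mod_cast (Nat.mul_div_cancel' h2).symm
        rw [mul_assoc, ← hieq]
        exact h3
    · rintro ⟨s, ⟨hs, hdvd⟩, rfl⟩
      refine ⟨?_, Dvd.intro s rfl, ?_⟩
      · calc m * s < m * d₂ := (Nat.mul_lt_mul_left hmpos).mpr hs
          _ = n := hmd
      · have : ((m * s : ℕ) : ℤ) = (m : ℤ) * (s : ℤ) := by push_cast; ring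
        rw [this, ← mul_assoc]
        exact hdvd
  rw [step6, Finset.card_image_of_injective _ (fun a b h => by
    exact Nat.eq_of_mul_eq_mul_left hmpos h)]
  -- Step 7: the s-count equals d₂ / e
  have step7 : ((Finset.range d₂).filter
        (fun s : ℕ => (d₁ : ℤ) ∣ β₁ * (m : ℕ) * (s : ℕ))).card = d₂ / e := by
    have hcongr : ∀ s : ℕ, ((d₁ : ℤ) ∣ β₁ * (m : ℕ) * (s : ℕ)) ↔ (s % e = 0) := by
      intro s
      rw [dvd_linear_iff d₁ hd1pos (β₁ * (m : ℕ)) s, ← hgdef, ← hedef,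
        Int.natCast_dvd_natCast]
      exact Nat.dvd_iff_mod_eq_zero
    rw [Finset.filter_congr (fun s _ => hcongr s)]
    exact count_mod d₂ e 0 hed2 hepos
  rw [step7]
  -- Step 8: final arithmetic
  have h1 : d₂ / e * e = d₂ := Nat.div_mul_cancel hed2
  calc d₂ / e * d₁ * n = d₂ / e * (e * g) * n := by rw [heg]
    _ = (d₂ / e * e) * g * n := by ring
    _ = d₂ * g * n := by rw [h1]
    _ = n * d₂ * g := by ring
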